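/- There exists a constant c₁(d) > 0 depending only on d with the following property: for every full-rank lattice L ⊆ ℝ^d and every integer 1 ≤ m ≤ d there exists a linear subspace W ⊆ ℝ^d with dim W = m − 1 such that for all x, x′ ∈ L, either x − x′ ∈ W or the Euclidean distance from x − x′ to W is at least c₁(d) · λ_m(L). (Equivalently: L is contained in a disjoint union of translates of W, and any two distinct such translates are at Euclidean distance at least c₁(d) λ_m(L) from each other.) -/

import Mathlib

/-- The Euclidean (`L²`) norm of a vector. -/
noncomputable def euclNorm {ι : Type*} [Fintype ι] (x : ι → ℝ) : ℝ :=
  Real.sqrt (∑ i, x i ^ 2)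

/-- The `i`-th successive minimum of a lattice `L ⊆ ℝ^ι`: the least `r > 0` such that `L`
contains `i` linearly independent vectors of Euclidean norm at most `r`. -/
noncomputable def succMin {ι : Type*} [Fintype ι] (L : Submodule ℤ (ι → ℝ)) (i : ℕ) : ℝ :=
  sInf {r : ℝ | 0 < r ∧ ∃ v : Fin i → (ι → ℝ), (∀ j, v j ∈ L) ∧
    LinearIndependent ℝ v ∧ ∀ j, euclNorm (v j) ≤ r}

namespace LatticeSep

open Submodule Set

variable {d : ℕ}

/-- The set whose infimum is `succMin`. -/
def minSet {ι : Type*} [Fintype ι] (L : Submodule ℤ (ι → ℝ)) (n : ℕ) : Set ℝ :=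
  {r : ℝ | 0 < r ∧ ∃ v : Fin n → (ι → ℝ), (∀ j, v j ∈ L) ∧
    LinearIndependent ℝ v ∧ ∀ j, euclNorm (v j) ≤ r}

lemma succMin_eq {ι : Type*} [Fintype ι] (L : Submodule ℤ (ι → ℝ)) (n : ℕ) :
    succMin L n = sInf (minSet L n) := rfl

lemma minSet_bddBelow {ι : Type*} [Fintype ι] (L : Submodule ℤ (ι → ℝ)) (n : ℕ) :
    BddBelow (minSet L n) := ⟨0, fun _ hr => hr.1.le⟩

lemma euclNorm_eq (x : Fin d → ℝ) :
    euclNorm x = ‖(WithLp.linearEquiv 2 ℝ (Fin d → ℝ)).symm x‖ := by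
  rw [EuclideanSpace.norm_eq]
  unfold euclNorm
  congr 1
  refine Finset.sum_congr rfl fun i _ => ?_
  rw [Real.norm_eq_abs, sq_abs]
  rfl

lemma euclNorm_nonneg (x : Fin d → ℝ) : 0 ≤ euclNorm x := Real.sqrt_nonneg _

lemma euclNorm_pos {x : Fin d → ℝ} (hx : x ≠ 0) : 0 < euclNorm x := by
  rw [euclNorm_eq]
  rw [norm_pos_iff]
  simpa using hx

lemma euclNorm_smul (c : ℝ) (x : Fin d → ℝ) : euclNorm (c • x) = |c| * euclNorm x := by
  rw [euclNorm_eq, euclNorm_eq, map_smul, norm_smul, Real.norm_eq_abs]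

lemma euclNorm_add_le (x y : Fin d → ℝ) : euclNorm (x + y) ≤ euclNorm x + euclNorm y := by
  rw [euclNorm_eq, euclNorm_eq, euclNorm_eq, map_add]
  exact norm_add_le _ _

lemma euclNorm_sum_le {α : Type*} (s : Finset α) (f : α → (Fin d → ℝ)) :
    euclNorm (∑ i ∈ s, f i) ≤ ∑ i ∈ s, euclNorm (f i) := by
  simp only [euclNorm_eq, map_sum]
  exact norm_sum_le _ _

lemma norm_le_euclNorm (x : Fin d → ℝ) : ‖x‖ ≤ euclNorm x := by
  rcases isEmpty_or_nonempty (Fin d) with h | h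
  · simp [Subsingleton.elim x 0, euclNorm, Finset.univ_eq_empty]
  refine (pi_norm_le_iff_of_nonneg (euclNorm_nonneg x)).2 fun i => ?_
  rw [Real.norm_eq_abs, ← Real.sqrt_sq_eq_abs]
  exact Real.sqrt_le_sqrt (Finset.single_le_sum (f := fun j => x j ^ 2)
    (fun j _ => sq_nonneg _) (Finset.mem_univ i))

/-- Finiteness of bounded pieces of the lattice. -/
lemma lattice_inter_finite (B : Module.Basis (Fin d) ℝ (Fin d → ℝ)) (R : ℝ) :
    {v : Fin d → ℝ | v ∈ span ℤ (Set.range B) ∧ euclNorm v ≤ R}.Finite := by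
  have hdisc : DiscreteTopology ((span ℤ (Set.range B) : Submodule ℤ (Fin d → ℝ)) :
      Set (Fin d → ℝ)) := by
    exact (inferInstance : DiscreteTopology (span ℤ (Set.range B)))
  have hclosed : IsClosed ((span ℤ (Set.range B) : Submodule ℤ (Fin d → ℝ)) :
      Set (Fin d → ℝ)) := by
    have : DiscreteTopology (span ℤ (Set.range B)).toAddSubgroup :=
      (inferInstance : DiscreteTopology (span ℤ (Set.range B)))
    exact AddSubgroup.isClosed_of_discrete (H := (span ℤ (Set.range B)).toAddSubgroup)
  have hbdd : Bornology.IsBounded {v : Fin d → ℝ | euclNorm v ≤ R} := by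
    refine Bornology.IsBounded.subset (Metric.isBounded_closedBall (x := (0 : Fin d → ℝ))
      (r := R)) fun v hv => ?_
    rw [Metric.mem_closedBall, dist_zero_right]
    exact (norm_le_euclNorm v).trans hv
  have := Metric.finite_isBounded_inter_isClosed (K := {v : Fin d → ℝ | euclNorm v ≤ R})
    DiscreteTopology.isDiscrete hbdd hclosed
  refine this.subset fun v hv => ⟨hv.2, hv.1⟩

/-- A uniform positive lower bound for norms of nonzero lattice vectors. -/
lemma exists_norm_lb (B : Module.Basis (Fin d) ℝ (Fin d → ℝ)) :
    ∃ ε > (0 : ℝ), ∀ v ∈ span ℤ (Set.range B), v ≠ 0 → ε ≤ euclNorm v := by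
  classical
  set S : Set (Fin d → ℝ) :=
    {v | v ∈ span ℤ (Set.range B) ∧ euclNorm v ≤ 1} \ {0} with hS
  have hSfin : S.Finite := (lattice_inter_finite B 1).subset diff_subset
  rcases S.eq_empty_or_nonempty with h | h
  · refine ⟨1, one_pos, fun v hv hv0 => ?_⟩
    by_contra hlt
    push_neg at hlt
    exact (eq_empty_iff_forall_notMem.1 h v) ⟨⟨hv, hlt.le⟩, hv0⟩
  · obtain ⟨v₀, hv₀, hmin⟩ := Set.exists_min_image S euclNorm hSfin h
    refine ⟨euclNorm v₀, euclNorm_pos (by simpa using hv₀.2), fun v hv hv0 => ?_⟩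
    rcases le_or_gt (euclNorm v) 1 with h1 | h1
    · exact hmin v ⟨⟨hv, h1⟩, hv0⟩
    · exact (hv₀.1.2).trans h1.le

lemma minSet_nonempty (B : Module.Basis (Fin d) ℝ (Fin d → ℝ)) {n : ℕ} (hn : n ≤ d) :
    (minSet (span ℤ (Set.range B)) n).Nonempty := by
  classical
  set v : Fin n → (Fin d → ℝ) := fun i => B (Fin.castLE hn i) with hv
  have hsum : 0 ≤ ∑ j, euclNorm (v j) := Finset.sum_nonneg fun j _ => euclNorm_nonneg _
  refine ⟨1 + ∑ j, euclNorm (v j), ⟨by linarith, v, ?_, ?_, ?_⟩⟩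
  · exact fun j => subset_span (mem_range_self _)
  · exact B.linearIndependent.comp _ (Fin.castLE_injective hn)
  · intro j
    have h1 : euclNorm (v j) ≤ ∑ j', euclNorm (v j') :=
      Finset.single_le_sum (fun j' _ => euclNorm_nonneg _) (Finset.mem_univ j)
    linarith

lemma succMin_le {ι : Type*} [Fintype ι] (L : Submodule ℤ (ι → ℝ)) (n : ℕ) {r : ℝ}
    (hr : r ∈ minSet L n) : succMin L n ≤ r :=
  csInf_le (minSet_bddBelow L n) hr

lemma minSet_antitone {ι : Type*} [Fintype ι] (L : Submodule ℤ (ι → ℝ)) {n m : ℕ}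
    (hnm : n ≤ m) : minSet L m ⊆ minSet L n := by
  rintro r ⟨hr, v, hvL, hvli, hvn⟩
  exact ⟨hr, v ∘ Fin.castLE hnm, fun j => hvL _, hvli.comp _ (Fin.castLE_injective hnm),
    fun j => hvn _⟩

lemma succMin_mono {ι : Type*} [Fintype ι] (L : Submodule ℤ (ι → ℝ)) {n m : ℕ}
    (hnm : n ≤ m) (hm : (minSet L m).Nonempty) : succMin L n ≤ succMin L m :=
  csInf_le_csInf (minSet_bddBelow L n) hm (minSet_antitone L hnm)

lemma succMin_zero {ι : Type*} [Fintype ι] (L : Submodule ℤ (ι → ℝ)) :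
    succMin L 0 = 0 := by
  have : minSet L 0 = Set.Ioi 0 := by
    ext r
    simp only [minSet, Set.mem_setOf_eq, Set.mem_Ioi, and_iff_left_iff_imp]
    exact fun _ => ⟨Fin.elim0, fun j => j.elim0, linearIndependent_empty_type,
      fun j => j.elim0⟩
  rw [succMin_eq, this, csInf_Ioi]

lemma succMin_pos (B : Module.Basis (Fin d) ℝ (Fin d → ℝ)) {n : ℕ} (h1 : 1 ≤ n) (hn : n ≤ d) :
    0 < succMin (span ℤ (Set.range B)) n := by
  obtain ⟨ε, hε, hlb⟩ := exists_norm_lb B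
  have : ε ≤ succMin (span ℤ (Set.range B)) n := by
    refine le_csInf (minSet_nonempty B hn) ?_
    rintro r ⟨hr, v, hvL, hvli, hvn⟩
    have h0 : v ⟨0, h1⟩ ≠ 0 := hvli.ne_zero _
    exact (hlb _ (hvL _) h0).trans (hvn _)
  linarith

/-- Attainment of the successive minima. -/
lemma succMin_attained (B : Module.Basis (Fin d) ℝ (Fin d → ℝ)) (n : ℕ)
    (hne : (minSet (span ℤ (Set.range B)) n).Nonempty) :
    ∃ v : Fin n → (Fin d → ℝ), (∀ j, v j ∈ span ℤ (Set.range B)) ∧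
      LinearIndependent ℝ v ∧
      ∀ j, euclNorm (v j) ≤ succMin (span ℤ (Set.range B)) n := by
  classical
  rcases Nat.eq_zero_or_pos n with rfl | hn
  · exact ⟨Fin.elim0, fun j => j.elim0, linearIndependent_empty_type, fun j => j.elim0⟩
  set L := span ℤ (Set.range B) with hL
  set μ := succMin L n with hμ
  obtain ⟨r, hrS, hrlt⟩ := exists_lt_of_csInf_lt hne (lt_add_one μ)
  set T : Set (Fin n → (Fin d → ℝ)) :=
    {v | (∀ j, v j ∈ L) ∧ LinearIndependent ℝ v ∧ ∀ j, euclNorm (v j) ≤ μ + 1} with hT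
  have hTfin : T.Finite := by
    have hpi : (Set.pi Set.univ (fun _ : Fin n =>
        {v : Fin d → ℝ | v ∈ L ∧ euclNorm v ≤ μ + 1})).Finite :=
      Set.Finite.pi fun _ => lattice_inter_finite B (μ + 1)
    refine hpi.subset fun v hv => ?_
    rw [Set.mem_univ_pi]
    exact fun j => ⟨hv.1 j, hv.2.2 j⟩
  have hTne : T.Nonempty := by
    obtain ⟨hr0, v, hv1, hv2, hv3⟩ := hrS
    exact ⟨v, hv1, hv2, fun j => (hv3 j).trans hrlt.le⟩
  have : Nonempty (Fin n) := ⟨⟨0, hn⟩⟩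
  set g : (Fin n → (Fin d → ℝ)) → ℝ :=
    fun v => Finset.univ.sup' Finset.univ_nonempty (fun j => euclNorm (v j)) with hg
  obtain ⟨v₀, hv₀T, hmin⟩ := Set.exists_min_image T g hTfin hTne
  have hgle : g v₀ ≤ μ := by
    by_contra hgt
    push_neg at hgt
    obtain ⟨r', hr'S, hr'lt⟩ := exists_lt_of_csInf_lt hne (lt_min hgt (lt_add_one μ))
    obtain ⟨hr'0, v', hv'1, hv'2, hv'3⟩ := hr'S
    have hv'T : v' ∈ T :=
      ⟨hv'1, hv'2, fun j => (hv'3 j).trans ((le_min_iff.1 hr'lt.le).2)⟩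
    have h1 : g v' ≤ r' := Finset.sup'_le _ _ fun j _ => hv'3 j
    have h2 : g v₀ ≤ g v' := hmin v' hv'T
    have h3 : r' < g v₀ := lt_of_lt_of_le hr'lt (min_le_left _ _)
    linarith
  exact ⟨v₀, hv₀T.1, hv₀T.2.1, fun j =>
    le_trans (Finset.le_sup' (fun j => euclNorm (v₀ j)) (Finset.mem_univ j)) hgle⟩

end LatticeSep

open Submodule Set LatticeSep in
/-- **Lemma 2.5.** -/
theorem lattice_subspace_separation (d : ℕ) :
    ∃ c₁ > (0 : ℝ), ∀ b : Fin d → (Fin d → ℝ), LinearIndependent ℝ b →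
      ∀ L : Submodule ℤ (Fin d → ℝ), L = Submodule.span ℤ (Set.range b) →
      ∀ m : ℕ, 1 ≤ m → m ≤ d →
      ∃ W : Submodule ℝ (Fin d → ℝ), Module.finrank ℝ W = m - 1 ∧
        ∀ x ∈ L, ∀ x' ∈ L, x - x' ∈ W ∨
          ∀ w ∈ W, c₁ * succMin L m ≤ euclNorm (x - x' - w) := by
  classical
  set K : ℕ := (2 * d + 2) ^ d with hKdef
  have hKpos : 0 < (K : ℝ) := by positivity
  refine ⟨1 / (4 * K), by positivity, ?_⟩
  intro b hb L hL m hm1 hmd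
  have hd1 : 1 ≤ d := le_trans hm1 hmd
  have hne : Nonempty (Fin d) := ⟨⟨0, hd1⟩⟩
  have hcard : Fintype.card (Fin d) = Module.finrank ℝ (Fin d → ℝ) := by
    simp [Module.finrank_fin_fun]
  set B : Module.Basis (Fin d) ℝ (Fin d → ℝ) := basisOfLinearIndependentOfCardEqFinrank hb hcard
    with hBdef
  have hBb : ⇑B = b := coe_basisOfLinearIndependentOfCardEqFinrank hb hcard
  have hLB : L = span ℤ (Set.range B) := by rw [hL, hBb]
  set μ := succMin L m with hμdef
  have hSm : (minSet L m).Nonempty := by rw [hLB]; exact minSet_nonempty B hmd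
  have hμpos : 0 < μ := by rw [hμdef, hLB]; exact succMin_pos B hm1 hmd
  -- the least level whose successive minimum equals `μ`
  have hPex : ∃ i, μ ≤ succMin L (i + 1) := ⟨m - 1, by rw [Nat.sub_add_cancel hm1]⟩
  set k := Nat.find hPex with hkdef
  have hPk : μ ≤ succMin L (k + 1) := Nat.find_spec hPex
  have hkle : k ≤ m - 1 := Nat.find_le (by rw [Nat.sub_add_cancel hm1])
  have hkm : k + 1 ≤ m := by omega
  have hklt : succMin L k < μ := by
    rcases Nat.eq_zero_or_pos k with hk0 | hk0
    · rw [hk0, succMin_zero]; exact hμpos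
    · have h := Nat.find_min hPex (show k - 1 < k by omega)
      push_neg at h
      rwa [Nat.sub_add_cancel hk0] at h
  have hSk : (minSet L k).Nonempty := hSm.mono (minSet_antitone L (by omega))
  -- attained families at levels `k` and `m`
  obtain ⟨u0, hu0L, hu0li, hu0n⟩ : ∃ v : Fin k → (Fin d → ℝ), (∀ j, v j ∈ L) ∧
      LinearIndependent ℝ v ∧ ∀ j, euclNorm (v j) ≤ succMin L k := by
    rw [hLB]; exact succMin_attained B k (hLB ▸ hSk)
  obtain ⟨tv, htvL, htvli, htvn⟩ : ∃ v : Fin m → (Fin d → ℝ), (∀ j, v j ∈ L) ∧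
      LinearIndependent ℝ v ∧ ∀ j, euclNorm (v j) ≤ μ := by
    rw [hμdef, hLB]; exact succMin_attained B m (hLB ▸ hSm)
  -- extend `u0` to `m - 1` linearly independent lattice vectors of norm at most `μ`
  obtain ⟨c, hct, hsc, htc, hcli⟩ := exists_linearIndepOn_id_extension
    ((linearIndepOn_id_range_iff hu0li.injective).2 hu0li) (Set.subset_union_left (t := Set.range tv))
  have hcfin : c.Finite := ((Set.finite_range u0).union (Set.finite_range tv)).subset hct
  set C : Finset (Fin d → ℝ) := hcfin.toFinset with hCdef
  have hCc : (C : Set (Fin d → ℝ)) = c := hcfin.coe_toFinset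
  have hCli : LinearIndependent ℝ (fun x : (C : Set (Fin d → ℝ)) => (x : Fin d → ℝ)) := by
    rw [hCc]; exact hcli
  have hfd : FiniteDimensional ℝ (span ℝ (C : Set (Fin d → ℝ))) :=
    FiniteDimensional.span_of_finite ℝ C.finite_toSet
  have hmC : m ≤ C.card := by
    have h1 : Module.finrank ℝ (span ℝ (C : Set (Fin d → ℝ))) = C.card :=
      finrank_span_finset_eq_card hCli
    have h2 : m ≤ Module.finrank ℝ (span ℝ (C : Set (Fin d → ℝ))) := by
      have htv' : ∀ i, tv i ∈ span ℝ (C : Set (Fin d → ℝ)) := by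
        intro i
        rw [hCc]
        exact htc (Set.mem_union_right _ (Set.mem_range_self i))
      set tv' : Fin m → span ℝ (C : Set (Fin d → ℝ)) := fun i => ⟨tv i, htv' i⟩ with htv'def
      have : LinearIndependent ℝ tv' := by
        apply LinearIndependent.of_comp (span ℝ (C : Set (Fin d → ℝ))).subtype
        exact htvli
      simpa using this.fintype_card_le_finrank
    omega
  have hsFC : Finset.image u0 Finset.univ ⊆ C := by
    rw [← Finset.coe_subset, hCc, Finset.coe_image, Finset.coe_univ, Set.image_univ]
    exact hsc
  have hsFcard : (Finset.image u0 Finset.univ).card = k := by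
    rw [Finset.card_image_of_injective _ hu0li.injective, Finset.card_univ, Fintype.card_fin]
  obtain ⟨D, hsFD, hDC, hDcard⟩ := Finset.exists_subsuperset_card_eq (n := m - 1) hsFC
    (by omega) (by omega)
  have hDli : LinearIndependent ℝ (fun x : (D : Set (Fin d → ℝ)) => (x : Fin d → ℝ)) :=
    LinearIndepOn.mono (s := (C : Set (Fin d → ℝ))) (v := id) hCli (by exact_mod_cast hDC)
  set W : Submodule ℝ (Fin d → ℝ) := span ℝ (D : Set (Fin d → ℝ)) with hWdef
  have hW1 : Module.finrank ℝ W = m - 1 := by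
    rw [hWdef, finrank_span_finset_eq_card hDli, hDcard]
  have hcmem : ∀ x ∈ c, x ∈ L ∧ euclNorm x ≤ μ := by
    intro x hx
    rcases hct hx with hx | hx
    · obtain ⟨i, rfl⟩ := hx
      exact ⟨hu0L i, (hu0n i).trans hklt.le⟩
    · obtain ⟨i, rfl⟩ := hx
      exact ⟨htvL i, htvn i⟩
  have hDmem : ∀ x ∈ D, x ∈ L ∧ euclNorm x ≤ μ := by
    intro x hx
    refine hcmem x ?_
    rw [← hCc]
    exact_mod_cast hDC hx
  -- enumerate a basis of `W`
  set e : Fin (m - 1) ≃ {x // x ∈ D} := (D.equivFinOfCardEq hDcard).symm with hedef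
  set u : Fin (m - 1) → (Fin d → ℝ) := fun i => ((e i : {x // x ∈ D}) : Fin d → ℝ) with hudef
  have huD : ∀ i, u i ∈ D := fun i => (e i).2
  have huL : ∀ i, u i ∈ L := fun i => (hDmem _ (huD i)).1
  have huμ : ∀ i, euclNorm (u i) ≤ μ := fun i => (hDmem _ (huD i)).2
  have hurange : Set.range u = (D : Set (Fin d → ℝ)) := by
    ext x
    constructor
    · rintro ⟨i, rfl⟩
      exact Finset.mem_coe.2 (huD i)
    · intro hx
      exact ⟨e.symm ⟨x, hx⟩, by simp [hudef]⟩
  have hWu : W = span ℝ (Set.range u) := by rw [hurange]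
  have huW : ∀ i, u i ∈ W := fun i => subset_span (Finset.mem_coe.2 (huD i))
  have hspanu0W : span ℝ (Set.range u0) ≤ W := by
    refine span_le.2 ?_
    intro x hx
    refine subset_span ?_
    obtain ⟨i, rfl⟩ := hx
    have : u0 i ∈ D := hsFD (Finset.mem_image_of_mem u0 (Finset.mem_univ i))
    exact Finset.mem_coe.2 this
  -- the main claim
  have main : ∀ z ∈ L, z ∉ W → ∀ w ∈ W, 1 / (4 * (K:ℝ)) * μ ≤ euclNorm (z - w) := by
    intro z hzL hzW w hwW
    by_contra hlt
    push_neg at hlt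
    obtain ⟨a, ha⟩ := (mem_span_range_iff_exists_fun ℝ).1 (hWu ▸ hwW)
    set T : ℕ := 2 * d + 2 with hTdef
    have hTpos : (0:ℝ) < T := by positivity
    set f : Fin (K + 1) → (Fin (m - 1) → Fin T) := fun n i =>
      ⟨(⌊(T : ℝ) * Int.fract ((n : ℕ) * a i)⌋).toNat, by
        have h0 : (0:ℤ) ≤ ⌊(T:ℝ) * Int.fract (((n:ℕ):ℝ) * a i)⌋ :=
          Int.floor_nonneg.2 (mul_nonneg hTpos.le (Int.fract_nonneg _))
        have h1 : ⌊(T:ℝ) * Int.fract (((n:ℕ):ℝ) * a i)⌋ < (T:ℤ) := by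
          rw [Int.floor_lt]
          have hfr : Int.fract (((n:ℕ):ℝ) * a i) < 1 := Int.fract_lt_one _
          have hc : (((T:ℤ)):ℝ) = (T:ℝ) := by push_cast; ring
          rw [hc]
          nlinarith
        omega⟩ with hfdef
    have hcards : Fintype.card (Fin (m - 1) → Fin T) < Fintype.card (Fin (K + 1)) := by
      rw [Fintype.card_fun, Fintype.card_fin, Fintype.card_fin, Fintype.card_fin]
      have h1 : T ^ (m - 1) ≤ T ^ d := Nat.pow_le_pow_right (by omega) (by omega)
      have h2 : T ^ d = K := by rw [hKdef]
      omega
    obtain ⟨p', q', hpq', hfeq⟩ := Fintype.exists_ne_map_eq_of_card_lt f hcards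
    obtain ⟨p, q, hpq, hf⟩ : ∃ p q : Fin (K + 1), (p:ℕ) < (q:ℕ) ∧ f p = f q := by
      rcases lt_or_gt_of_ne hpq' with h | h
      exacts [⟨p', q', h, hfeq⟩, ⟨q', p', h, hfeq.symm⟩]
    set N : ℕ := (q:ℕ) - (p:ℕ) with hNdef
    have hN1 : 1 ≤ N := by omega
    have hNK : N ≤ K := by have := q.2; omega
    have hNr : (N:ℝ) = ((q:ℕ):ℝ) - ((p:ℕ):ℝ) := by
      rw [hNdef, Nat.cast_sub hpq.le]
    have hNpos : (0:ℝ) < N := by exact_mod_cast hN1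
    set cc : Fin (m - 1) → ℝ :=
      fun i => Int.fract (((q:ℕ):ℝ) * a i) - Int.fract (((p:ℕ):ℝ) * a i) with hccdef
    have hcc : ∀ i, |cc i| ≤ 1 / T := by
      intro i
      have hfl : ⌊(T:ℝ) * Int.fract (((q:ℕ):ℝ) * a i)⌋ =
          ⌊(T:ℝ) * Int.fract (((p:ℕ):ℝ) * a i)⌋ := by
        have h := congrFun hf i
        rw [hfdef] at h
        simp only [Fin.mk.injEq] at h
        have h0q : (0:ℤ) ≤ ⌊(T:ℝ) * Int.fract (((q:ℕ):ℝ) * a i)⌋ :=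
          Int.floor_nonneg.2 (mul_nonneg hTpos.le (Int.fract_nonneg _))
        have h0p : (0:ℤ) ≤ ⌊(T:ℝ) * Int.fract (((p:ℕ):ℝ) * a i)⌋ :=
          Int.floor_nonneg.2 (mul_nonneg hTpos.le (Int.fract_nonneg _))
        omega
      have habs := Int.abs_sub_lt_one_of_floor_eq_floor hfl
      rw [← mul_sub, abs_mul, abs_of_nonneg hTpos.le] at habs
      simp only [hccdef]
      rw [le_div_iff₀ hTpos, mul_comm]
      exact habs.le
    set y : Fin d → ℝ := (N:ℝ) • z -
      ∑ i, ((⌊((q:ℕ):ℝ) * a i⌋ : ℝ) - (⌊((p:ℕ):ℝ) * a i⌋ : ℝ)) • u i with hydef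
    have hyL : y ∈ L := by
      refine sub_mem ?_ (sum_mem fun i _ => ?_)
      · have h1 : ((N:ℤ):ℝ) • z = (N:ℤ) • z := Int.cast_smul_eq_zsmul ℝ _ z
        have h2 : ((N:ℕ):ℝ) = ((N:ℤ):ℝ) := by push_cast; ring
        rw [h2, h1]
        exact zsmul_mem hzL _
      · have h2 : ((⌊((q:ℕ):ℝ) * a i⌋ : ℝ) - (⌊((p:ℕ):ℝ) * a i⌋ : ℝ)) =
            (((⌊((q:ℕ):ℝ) * a i⌋ - ⌊((p:ℕ):ℝ) * a i⌋ : ℤ)) : ℝ) := by push_cast; ring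
        rw [h2, Int.cast_smul_eq_zsmul]
        exact zsmul_mem (huL i) _
    have hkey : y = (N:ℝ) • (z - w) + ∑ i, cc i • u i := by
      have hw : (N:ℝ) • w = ∑ i, ((N:ℝ) * a i) • u i := by
        rw [← ha, Finset.smul_sum]
        exact Finset.sum_congr rfl fun i _ => smul_smul _ _ _
      have hsum : ∑ i, ((N:ℝ) * a i) • u i = ∑ i, cc i • u i +
          ∑ i, ((⌊((q:ℕ):ℝ) * a i⌋ : ℝ) - (⌊((p:ℕ):ℝ) * a i⌋ : ℝ)) • u i := by
        rw [← Finset.sum_add_distrib]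
        refine Finset.sum_congr rfl fun i _ => ?_
        rw [← add_smul]
        congr 1
        rw [hccdef]
        simp only [Int.fract]
        rw [hNr]
        ring
      rw [smul_sub, hw, hsum, hydef]
      abel
    have hnormy : euclNorm y < μ := by
      have h1 : euclNorm y ≤ euclNorm ((N:ℝ) • (z - w)) + euclNorm (∑ i, cc i • u i) := by
        rw [hkey]; exact euclNorm_add_le _ _
      have h2 : euclNorm ((N:ℝ) • (z - w)) < μ / 4 := by
        rw [euclNorm_smul, abs_of_nonneg hNpos.le]
        calc (N:ℝ) * euclNorm (z - w) < (N:ℝ) * (1 / (4 * (K:ℝ)) * μ) :=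
              mul_lt_mul_of_pos_left hlt hNpos
        _ ≤ (K:ℝ) * (1 / (4 * (K:ℝ)) * μ) := by
              refine mul_le_mul_of_nonneg_right ?_ (by positivity)
              exact_mod_cast hNK
        _ = μ / 4 := by field_simp
      have h3 : euclNorm (∑ i, cc i • u i) ≤ μ / 2 := by
        calc euclNorm (∑ i, cc i • u i) ≤ ∑ i, euclNorm (cc i • u i) :=
              euclNorm_sum_le _ _
        _ ≤ ∑ _i : Fin (m - 1), (1 / (T:ℝ)) * μ := by
              refine Finset.sum_le_sum fun i _ => ?_
              rw [euclNorm_smul]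
              exact mul_le_mul (hcc i) (huμ i) (euclNorm_nonneg _) (by positivity)
        _ = ((m - 1 : ℕ):ℝ) * ((1 / (T:ℝ)) * μ) := by
              rw [Finset.sum_const, Finset.card_univ, Fintype.card_fin, nsmul_eq_mul]
        _ = (((m - 1 : ℕ):ℝ) * (1 / (T:ℝ))) * μ := by ring
        _ ≤ (1/2) * μ := by
              refine mul_le_mul_of_nonneg_right ?_ hμpos.le
              have hm1d : ((m - 1 : ℕ):ℝ) ≤ (d:ℝ) := by exact_mod_cast (by omega : m - 1 ≤ d)
              have hTval : (T:ℝ) = 2 * (d:ℝ) + 2 := by rw [hTdef]; push_cast; ring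
              rw [hTval, mul_one_div, div_le_div_iff₀ (by positivity) (by norm_num)]
              linarith
        _ = μ / 2 := by ring
      linarith
    have hyW : y ∉ W := by
      intro hyW
      apply hzW
      have hsumW : ∑ i, cc i • u i ∈ W := sum_mem fun i _ => W.smul_mem _ (huW i)
      have hNzw : (N:ℝ) • (z - w) ∈ W := by
        have heq : (N:ℝ) • (z - w) = y - ∑ i, cc i • u i := by rw [hkey]; abel
        rw [heq]
        exact sub_mem hyW hsumW
      have hzw : z - w ∈ W := by
        have h := W.smul_mem ((N:ℝ)⁻¹) hNzw
        rwa [smul_smul, inv_mul_cancel₀ (ne_of_gt hNpos), one_smul] at h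
      have : z = (z - w) + w := by abel
      rw [this]
      exact add_mem hzw hwW
    have hy0 : y ≠ 0 := fun h => hyW (h ▸ W.zero_mem)
    have hyspan : y ∉ span ℝ (Set.range u0) := fun hy => hyW (hspanu0W hy)
    have hv'li : LinearIndependent ℝ (Fin.cons y u0 : Fin (k + 1) → (Fin d → ℝ)) :=
      hu0li.fin_cons hyspan
    set r₀ : ℝ := max (succMin L k) (euclNorm y) with hr₀def
    have hr₀S : r₀ ∈ minSet L (k + 1) := by
      refine ⟨lt_max_of_lt_right (euclNorm_pos hy0), Fin.cons y u0, ?_, hv'li, ?_⟩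
      · intro j
        refine Fin.cases ?_ ?_ j
        · rw [Fin.cons_zero]; exact hyL
        · intro i; rw [Fin.cons_succ]; exact hu0L i
      · intro j
        refine Fin.cases ?_ ?_ j
        · rw [Fin.cons_zero]; exact le_max_right _ _
        · intro i; rw [Fin.cons_succ]
          exact le_trans (hu0n i) (le_max_left _ _)
    have hle : succMin L (k + 1) ≤ r₀ := succMin_le L (k + 1) hr₀S
    have hr₀lt : r₀ < μ := max_lt hklt hnormy
    linarith
  refine ⟨W, hW1, ?_⟩
  intro x hx x' hx'
  by_cases hz : x - x' ∈ W
  · exact Or.inl hz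
  · refine Or.inr fun w hw => ?_
    by_contra hlt
    push_neg at hlt
    exact absurd hlt (not_lt.2 (main _ (sub_mem hx hx') hz w hw))
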